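/- Let K be a valued field and c ∈ K. A subset B ⊆ K is a maximal ball not containing c (i.e., B is a ball with c ∉ B, and every ball strictly containing B contains c) if and only if B = {x ∈ K : rv(x - c) = ξ} for some nonzero ξ ∈ RV. -/

import Mathlib

/- `K` is a valued field: a field with a (Krull) valuation `v : K → Γ₀ = Γ ∪ {0}`,
written multiplicatively. -/
variable {K : Type*} [Field K] {Γ₀ : Type*} [LinearOrderedCommGroupWithZero Γ₀]

/-- The relation defining the leading-term structure `RV_λ = K^×/(1+I) ∪ {0}` where
`I = {x : |x| < λ}` : two elements are identified iff both are `0` or they differ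
multiplicatively by an element of `1 + I`. -/
def rvRel (v : Valuation K Γ₀) (lam : Γ₀) (x y : K) : Prop :=
  (x = 0 ∧ y = 0) ∨ ∃ u : K, v (u - 1) < lam ∧ y = x * u

/-- The leading term map `rv_λ : K → RV_λ`, extending the projection
`K^× → K^×/(1+I)` by `0 ↦ 0`. -/
def rv (v : Valuation K Γ₀) (lam : Γ₀) (x : K) : Quot (rvRel v lam) := Quot.mk _ x

/-- A ball in the valued field `K`: an infinite proper subset `B` such that whenever
`x, x' ∈ B` and `|x - y| ≤ |x - x'|`, also `y ∈ B`. -/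
def IsBall (v : Valuation K Γ₀) (B : Set K) : Prop :=
  B.Infinite ∧ B ≠ Set.univ ∧ ∀ x ∈ B, ∀ x' ∈ B, ∀ y : K, v (x - y) ≤ v (x - x') → y ∈ B

section Aux

omit [Field K] in
lemma mul_lt_mul_of_lt_of_le₀ {a b c d : Γ₀} (hab : a ≤ b) (hb : b ≠ 0) (hcd : c < d) :
    a * c < b * d :=
  (mul_le_mul_of_nonneg_right hab zero_le').trans_lt (mul_lt_mul_of_pos_left hcd (zero_lt_iff.mpr hb))

variable (v : Valuation K Γ₀)

/-- If `v (u - 1) < 1` then `v u = 1`. -/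
lemma aux_vu_one {u : K} (hu : v (u - 1) < 1) : v u = 1 := by
  have h : v (u - 1) ≠ v 1 := by simpa using hu.ne
  have := v.map_add_of_distinct_val h
  simp only [sub_add_cancel, v.map_one] at this
  rw [this, max_eq_right hu.le]

omit [Field K] in
/-- Transport of a predicate along the quotient. -/
lemma aux_quot_lift {r : K → K → Prop} {f : K → Prop} (h : ∀ x y, r x y → f x = f y)
    {a b : K} (hab : Quot.mk r a = Quot.mk r b) : f a = f b := by
  have := congrArg (Quot.lift f h) hab
  simpa using this

/-- Multiplying by `u` with `v (u - 1) < 1` preserves the open ball of radius `v b`. -/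
lemma aux_key {b z u : K} (hu : v (u - 1) < 1) (hz : v (z - b) < v b) :
    v (z * u - b) < v b := by
  have hu1 : v u = 1 := aux_vu_one v hu
  have hb0 : v b ≠ 0 := by
    intro h0
    rw [h0] at hz
    exact absurd hz (by simp [h0])
  have hzb : v z = v b := by
    have h1 : v (z - b) ≠ v b := hz.ne
    have := v.map_add_of_distinct_val (x := z - b) (y := b) (by simpa using h1)
    simpa [max_eq_right hz.le] using this
  have h2 : v (z * u - z) < v b := by
    have : z * u - z = z * (u - 1) := by ring
    rw [this, v.map_mul, hzb]
    calc v b * v (u - 1) < v b * 1 := mul_lt_mul_of_lt_of_le₀ le_rfl hb0 hu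
      _ = v b := mul_one _
  have : v (z * u - b) ≤ max (v (z * u - z)) (v (z - b)) := by
    have := v.map_add (z * u - z) (z - b)
    simpa [sub_add_sub_cancel] using this
  exact lt_of_le_of_lt this (max_lt h2 hz)

/-- The predicate `v (x - b) < v b` is invariant under `rvRel v 1`. -/
lemma aux_invariant (b : K) : ∀ x y : K, rvRel v 1 x y →
    ((v (x - b) < v b) = (v (y - b) < v b)) := by
  intro x y hxy
  rcases hxy with ⟨hx, hy⟩ | ⟨u, hu, hy⟩
  · rw [hx, hy]
  have hu1 : v u = 1 := aux_vu_one v hu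
  have hu0 : u ≠ 0 := by
    intro h0
    rw [h0, v.map_zero] at hu1
    exact zero_ne_one hu1
  have huinv : v (u⁻¹ - 1) < 1 := by
    have : u⁻¹ - 1 = -(u - 1) * u⁻¹ := by field_simp; ring
    rw [this, v.map_mul, v.map_neg, map_inv₀, hu1, inv_one, mul_one]
    exact hu
  subst hy
  apply propext
  constructor
  · exact aux_key v hu
  · intro h
    have := aux_key v huinv h
    have hx : x * u * u⁻¹ = x := by field_simp
    rwa [hx] at this

/-- Characterization of the fibers of `rv` over nonzero elements. -/
lemma aux_rv_eq_iff {b : K} (hb : b ≠ 0) (z : K) :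
    rv v 1 z = rv v 1 b ↔ v (z - b) < v b := by
  have hb0 : v b ≠ 0 := v.ne_zero_iff.mpr hb
  constructor
  · intro h
    have h2 : (v (z - b) < v b) = (v (b - b) < v b) :=
      aux_quot_lift (aux_invariant v b) h
    rw [h2]
    simp only [sub_self, v.map_zero]
    exact zero_lt_iff.mpr hb0
  · intro h
    have hrel : rvRel v 1 b z := by
      refine Or.inr ⟨z * b⁻¹, ?_, by field_simp⟩
      have : z * b⁻¹ - 1 = (z - b) * b⁻¹ := by field_simp
      rw [this, v.map_mul, map_inv₀]
      rw [mul_comm]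
      calc (v b)⁻¹ * v (z - b) < (v b)⁻¹ * v b :=
            mul_lt_mul_of_lt_of_le₀ le_rfl (by simp [hb0]) h
        _ = 1 := inv_mul_cancel₀ hb0
    exact (Quot.sound hrel).symm

/-- `rv b ≠ rv 0` for `b ≠ 0`. -/
lemma aux_rv_ne_zero {b : K} (hb : b ≠ 0) : rv v 1 b ≠ rv v 1 0 := by
  intro h
  have inv : ∀ x y : K, rvRel v 1 x y → ((x = 0) = (y = 0)) := by
    intro x y hxy
    rcases hxy with ⟨hx, hy⟩ | ⟨u, hu, hy⟩
    · rw [hx, hy]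
    · have hu1 : v u = 1 := aux_vu_one v hu
      have hu0 : u ≠ 0 := fun h0 => by simp [h0] at hu1
      subst hy
      simp [mul_eq_zero, hu0]
  have h2 : (b = 0) = ((0 : K) = 0) := aux_quot_lift inv h
  exact hb (by rw [h2])

end Aux

/-- The fiber set is a ball avoiding `c`, and any ball strictly containing it contains `c`. -/
lemma aux_fiber_ball (v : Valuation K Γ₀) (hv : ∃ a : K, v a ≠ 0 ∧ v a ≠ 1)
    (c : K) {b : K} (hb : b ≠ 0) :
    IsBall v {x : K | v (x - c - b) < v b} ∧ c ∉ {x : K | v (x - c - b) < v b} ∧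
      ∀ B' : Set K, IsBall v B' → {x : K | v (x - c - b) < v b} ⊂ B' → c ∈ B' := by
  set F : Set K := {x : K | v (x - c - b) < v b} with hF
  have hvb : (0 : Γ₀) < v b := by simp [zero_lt_iff, hb]
  have hcF : c ∉ F := by
    intro h
    simp only [hF, Set.mem_setOf_eq] at h
    rw [show c - c - b = -b by ring, v.map_neg] at h
    exact lt_irrefl _ h
  have hmF : c + b ∈ F := by simp [hF, hvb]
  refine ⟨⟨?_, ?_, ?_⟩, hcF, ?_⟩
  · -- infinite
    obtain ⟨a, ha0, ha1⟩ := hv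
    obtain ⟨t, ht0, ht1⟩ : ∃ t : K, v t ≠ 0 ∧ v t < 1 := by
      rcases lt_or_gt_of_ne ha1 with h | h
      · exact ⟨a, ha0, h⟩
      · refine ⟨a⁻¹, by simp [map_inv₀, ha0], ?_⟩
        rw [map_inv₀]
        exact inv_lt_one_of_one_lt₀ h
    have ht0' : t ≠ 0 := fun h => ht0 (by simp [h])
    refine Set.infinite_of_injective_forall_mem
      (f := fun n : ℕ => c + b + b * t ^ (n + 1)) ?_ ?_
    · intro m n hmn
      simp only [add_right_inj] at hmn
      have h1 := mul_left_cancel₀ hb hmn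
      have h2 : v t ^ (m + 1) = v t ^ (n + 1) := by
        rw [← v.map_pow, ← v.map_pow, h1]
      have := pow_right_injective₀ (zero_lt_iff.mpr ht0)
        (ne_of_lt ht1) h2
      omega
    · intro n
      simp only [hF, Set.mem_setOf_eq, add_sub_cancel_left]
      have : c + b + b * t ^ (n + 1) - c - b = b * t ^ (n + 1) := by ring
      rw [this, v.map_mul, v.map_pow]
      calc v b * v t ^ (n + 1) < v b * 1 :=
            mul_lt_mul_of_lt_of_le₀ le_rfl hvb.ne'
              (pow_lt_one₀ zero_le' ht1 (Nat.succ_ne_zero n))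
        _ = v b := mul_one _
  · -- proper
    intro h
    exact hcF (h ▸ Set.mem_univ c)
  · -- ball property
    intro x hx x' hx' y hy
    simp only [hF, Set.mem_setOf_eq] at hx hx' ⊢
    have h1 : v (x - x') < v b := by
      have : x - x' = (x - c - b) - (x' - c - b) := by ring
      rw [this]
      exact lt_of_le_of_lt (v.map_sub _ _) (max_lt hx hx')
    have h2 : v (x - y) < v b := lt_of_le_of_lt hy h1
    have : y - c - b = (x - c - b) - (x - y) := by ring
    rw [this]
    exact lt_of_le_of_lt (v.map_sub _ _) (max_lt hx h2)
  · -- maximality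
    intro B' hB' hsub
    obtain ⟨x', hx'B, hx'F⟩ := Set.exists_of_ssubset hsub
    have hsub' := hsub.1
    have hm' : c + b ∈ B' := hsub' hmF
    simp only [hF, Set.mem_setOf_eq, not_lt] at hx'F
    refine hB'.2.2 (c + b) hm' x' hx'B c ?_
    have h1 : v (c + b - c) = v b := by simp
    have h2 : v (c + b - x') = v (x' - c - b) := by
      rw [v.map_sub_swap]; ring_nf
    rw [h1, h2]
    exact hx'F

/-- For a (nontrivially) valued field `K` and `c ∈ K`: a subset `B ⊆ K` is a maximal
ball not containing `c` if and only if `B` is a fiber `{x : rv(x - c) = ξ}` of a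
nonzero element `ξ ∈ RV`. -/
theorem maximal_ball_avoiding_iff_rv_fiber (v : Valuation K Γ₀)
    (hv : ∃ a : K, v a ≠ 0 ∧ v a ≠ 1) (c : K) (B : Set K) :
    (IsBall v B ∧ c ∉ B ∧ ∀ B' : Set K, IsBall v B' → B ⊂ B' → c ∈ B') ↔
      ∃ ξ : Quot (rvRel v 1), ξ ≠ rv v 1 0 ∧ B = {x : K | rv v 1 (x - c) = ξ} := by
  constructor
  · rintro ⟨hB, hcB, hmax⟩
    obtain ⟨a, haB⟩ := hB.1.nonempty
    have hac : a - c ≠ 0 := sub_ne_zero.mpr (fun h => hcB (h ▸ haB))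
    refine ⟨rv v 1 (a - c), aux_rv_ne_zero v hac, ?_⟩
    have hfib : {x : K | rv v 1 (x - c) = rv v 1 (a - c)}
        = {x : K | v (x - c - (a - c)) < v (a - c)} := by
      ext x
      exact aux_rv_eq_iff v hac (x - c)
    rw [hfib]
    obtain ⟨hFball, hcF, _⟩ := aux_fiber_ball v hv c hac
    -- B ⊆ F
    have hBF : B ⊆ {x : K | v (x - c - (a - c)) < v (a - c)} := by
      intro x hxB
      simp only [Set.mem_setOf_eq]
      by_contra h
      push_neg at h
      have : v (a - c) ≤ v (a - x) := by
        rw [v.map_sub_swap a x]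
        calc v (a - c) ≤ v (x - c - (a - c)) := h
          _ = v (x - a) := by ring_nf
      exact hcB (hB.2.2 a haB x hxB c this)
    by_cases hEq : B = {x : K | v (x - c - (a - c)) < v (a - c)}
    · exact hEq
    · exact absurd (hmax _ hFball (Set.ssubset_iff_subset_ne.mpr ⟨hBF, hEq⟩)) hcF
  · rintro ⟨ξ, hξ, hBeq⟩
    obtain ⟨b, rfl⟩ := Quot.exists_rep ξ
    have hb : b ≠ 0 := by
      rintro rfl
      exact hξ rfl
    have hfib : B = {x : K | v (x - c - b) < v b} := by
      rw [hBeq]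
      ext x
      exact aux_rv_eq_iff v hb (x - c)
    rw [hfib]
    obtain ⟨h1, h2, h3⟩ := aux_fiber_ball v hv c hb
    exact ⟨h1, h2, h3⟩
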